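/- arXiv:2307.13481 — 3 statements merged into one kernel-verified Lean document; each statement's English description precedes it below -/
import Mathlib

section
/- Let Δ = [a, b) × [c, d) be an axis-parallel half-open rectangle in ℝ² with Lebesgue measure μ(Δ) = (b − a)(d − c) ≥ 2 + α. Then Δ contains at least one point of the lattice Γ, i.e., |Δ ∩ Γ| ≥ 1. -/
open Set

/-- The inverse golden ratio `α = (√5 - 1)/2`. -/
noncomputable def invGolden : ℝ := (Real.sqrt 5 - 1) / 2

/-- The rotated lattice `Γ = Aℤ²`, where `A` has rows `(1, -α)` and `(α, 1)`,
i.e. `A(n,m)ᵀ = (n - αm, αn + m)ᵀ`. -/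
def Γ : Set (ℝ × ℝ) :=
  {p | ∃ n m : ℤ, p = ((n : ℝ) - invGolden * m, invGolden * n + m)}

private lemma sqrt5_sq : Real.sqrt 5 * Real.sqrt 5 = 5 :=
  Real.mul_self_sqrt (by norm_num)

private lemma sqrt5_gt : (2:ℝ) < Real.sqrt 5 := by
  nlinarith [sqrt5_sq, Real.sqrt_nonneg 5]

private lemma sqrt5_lt : Real.sqrt 5 < 3 := by
  nlinarith [sqrt5_sq, Real.sqrt_nonneg 5]

lemma invGolden_pos : 0 < invGolden := by unfold invGolden; linarith [sqrt5_gt]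

lemma invGolden_lt_one : invGolden < 1 := by unfold invGolden; linarith [sqrt5_lt]

lemma invGolden_sq : invGolden * invGolden = 1 - invGolden := by
  unfold invGolden; linear_combination sqrt5_sq / 4

/-- Core lemma A: a rectangle of width `≥ 1` and height `≥ 1 + α` contains a
lattice point. -/
lemma core_A (a b c d : ℝ) (hw : 1 ≤ b - a) (hh : 1 + invGolden ≤ d - c) :
    ∃ n m : ℤ, a ≤ (n : ℝ) - invGolden * m ∧ (n : ℝ) - invGolden * m < b ∧
      c ≤ invGolden * n + m ∧ invGolden * n + m < d := by
  classical
  have hα : 0 < invGolden := invGolden_pos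
  have hα1 : invGolden < 1 := invGolden_lt_one
  set α := invGolden with hα_def
  set P : ℤ → Prop := fun z => a ≤ (z : ℝ) + α * ⌊α * (z : ℝ) - c⌋ with hP_def
  have Hinh : ∃ z, P z := by
    refine ⟨max 0 ⌈a + α * c + α⌉, ?_⟩
    set z : ℤ := max 0 ⌈a + α * c + α⌉ with hz
    have h0 : (0:ℝ) ≤ (z:ℝ) := by exact_mod_cast le_max_left 0 ⌈a + α * c + α⌉
    have h1 : a + α * c + α ≤ (z:ℝ) := by
      calc a + α * c + α ≤ (⌈a + α * c + α⌉ : ℝ) := Int.le_ceil _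
        _ ≤ (z:ℝ) := by exact_mod_cast le_max_right 0 ⌈a + α * c + α⌉
    have hf : α * (z:ℝ) - c - 1 < (⌊α * (z:ℝ) - c⌋ : ℝ) := Int.sub_one_lt_floor _
    show a ≤ (z : ℝ) + α * ⌊α * (z : ℝ) - c⌋
    nlinarith [mul_lt_mul_of_pos_left hf hα,
      mul_nonneg (mul_nonneg hα.le hα.le) h0]
  have Hbdd : ∃ b0 : ℤ, ∀ z : ℤ, P z → b0 ≤ z := by
    refine ⟨⌈(a + α * c) / (1 + α * α)⌉, fun z hz => ?_⟩
    have h1 : (⌊α * (z:ℝ) - c⌋ : ℝ) ≤ α * (z:ℝ) - c := Int.floor_le _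
    have h2 : α * (⌊α * (z:ℝ) - c⌋ : ℝ) ≤ α * (α * (z:ℝ) - c) :=
      mul_le_mul_of_nonneg_left h1 hα.le
    have hz' : a ≤ (z : ℝ) + α * ⌊α * (z : ℝ) - c⌋ := hz
    have hpos : (0:ℝ) < 1 + α * α := by nlinarith
    have hle : (a + α * c) / (1 + α * α) ≤ (z : ℝ) := by
      rw [div_le_iff₀ hpos]; nlinarith
    exact Int.ceil_le.mpr hle
  obtain ⟨n, hPn, hmin⟩ := Int.exists_least_of_bdd Hbdd Hinh
  have hPn' : a ≤ (n : ℝ) + α * (⌊α * (n : ℝ) - c⌋ : ℝ) := hPn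
  have hnot : ¬ P (n - 1) := fun h => by have := hmin _ h; omega
  have hnot2 : ¬ (a ≤ ((n - 1 : ℤ) : ℝ) + α * ⌊α * ((n - 1 : ℤ) : ℝ) - c⌋) := hnot
  push_cast at hnot2
  rw [not_le] at hnot2
  rw [show α * ((n:ℝ) - 1) - c = α * (n:ℝ) - α - c from by ring] at hnot2
  set j : ℤ := ⌊α * (n:ℝ) - c⌋ with hj_def
  set j' : ℤ := ⌊α * (n:ℝ) - α - c⌋ with hj'_def
  have hj1 : (j:ℝ) ≤ α * (n:ℝ) - c := Int.floor_le _
  have hj2 : α * (n:ℝ) - c < (j:ℝ) + 1 := Int.lt_floor_add_one _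
  have hj'2 : α * (n:ℝ) - α - c < (j':ℝ) + 1 := Int.lt_floor_add_one _
  have hj'le : j' ≤ j := Int.floor_mono (by linarith)
  have hjle : j ≤ j' + 1 := by
    have h1 : α * (n:ℝ) - c ≤ α * (n:ℝ) - α - c + ((1:ℤ):ℝ) := by push_cast; linarith
    have h2 := Int.floor_mono h1
    rwa [Int.floor_add_intCast] at h2
  by_cases hb : (n:ℝ) + α * (j:ℝ) < b
  · refine ⟨n, -j, ?_, ?_, ?_, ?_⟩ <;> push_cast <;> linarith
  · push_neg at hb
    have hjj : j = j' + 1 := by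
      by_contra hne
      have hj'eq : j' = j := by omega
      rw [hj'eq] at hnot2
      linarith
    have hcast : α * ((j':ℤ):ℝ) = α * (j:ℝ) - α := by rw [hjj]; push_cast; ring
    have hδ : α * (n:ℝ) - c < (j:ℝ) + α := by
      have hjc : ((j':ℤ):ℝ) = (j:ℝ) - 1 := by rw [hjj]; push_cast; ring
      linarith [hj'2]
    have hxlt : (n:ℝ) + α * (j:ℝ) < a + 1 + α := by linarith [hnot2]
    refine ⟨n, 1 - j, ?_, ?_, ?_, ?_⟩ <;> push_cast
    · linarith
    · linarith
    · linarith
    · linarith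

/-- Core lemma B: a rectangle of width `≥ 1 + α` and height `≥ 1` contains a
lattice point. -/
lemma core_B (a b c d : ℝ) (hw : 1 + invGolden ≤ b - a) (hh : 1 ≤ d - c) :
    ∃ n m : ℤ, a ≤ (n : ℝ) - invGolden * m ∧ (n : ℝ) - invGolden * m < b ∧
      c ≤ invGolden * n + m ∧ invGolden * n + m < d := by
  classical
  have hα : 0 < invGolden := invGolden_pos
  have hα1 : invGolden < 1 := invGolden_lt_one
  set α := invGolden with hα_def
  set P : ℤ → Prop := fun z => c ≤ α * (⌈a + α * (z:ℝ)⌉ : ℝ) + (z:ℝ) with hP_def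
  have Hinh : ∃ z, P z := by
    refine ⟨max 0 ⌈c - α * a⌉, ?_⟩
    set z : ℤ := max 0 ⌈c - α * a⌉ with hz
    have h0 : (0:ℝ) ≤ (z:ℝ) := by exact_mod_cast le_max_left 0 ⌈c - α * a⌉
    have h1 : c - α * a ≤ (z:ℝ) := by
      calc c - α * a ≤ (⌈c - α * a⌉ : ℝ) := Int.le_ceil _
        _ ≤ (z:ℝ) := by exact_mod_cast le_max_right 0 ⌈c - α * a⌉
    have hf : a + α * (z:ℝ) ≤ (⌈a + α * (z:ℝ)⌉ : ℝ) := Int.le_ceil _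
    show c ≤ α * (⌈a + α * (z:ℝ)⌉ : ℝ) + (z:ℝ)
    nlinarith [mul_le_mul_of_nonneg_left hf hα.le,
      mul_nonneg (mul_nonneg hα.le hα.le) h0]
  have Hbdd : ∃ b0 : ℤ, ∀ z : ℤ, P z → b0 ≤ z := by
    refine ⟨⌈(c - α * a - α) / (1 + α * α)⌉, fun z hz => ?_⟩
    have h1 : (⌈a + α * (z:ℝ)⌉ : ℝ) < a + α * (z:ℝ) + 1 := Int.ceil_lt_add_one _
    have hz' : c ≤ α * (⌈a + α * (z:ℝ)⌉ : ℝ) + (z:ℝ) := hz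
    have hpos : (0:ℝ) < 1 + α * α := by nlinarith
    have hle : (c - α * a - α) / (1 + α * α) ≤ (z : ℝ) := by
      rw [div_le_iff₀ hpos]
      nlinarith [mul_lt_mul_of_pos_left h1 hα]
    exact Int.ceil_le.mpr hle
  obtain ⟨m, hPm, hmin⟩ := Int.exists_least_of_bdd Hbdd Hinh
  have hPm' : c ≤ α * (⌈a + α * (m:ℝ)⌉ : ℝ) + (m:ℝ) := hPm
  have hnot : ¬ P (m - 1) := fun h => by have := hmin _ h; omega
  have hnot2 : ¬ (c ≤ α * (⌈a + α * ((m - 1 : ℤ):ℝ)⌉ : ℝ) + ((m - 1 : ℤ):ℝ)) := hnot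
  push_cast at hnot2
  rw [not_le] at hnot2
  rw [show a + α * ((m:ℝ) - 1) = a + α * (m:ℝ) - α from by ring] at hnot2
  set k : ℤ := ⌈a + α * (m:ℝ)⌉ with hk_def
  set k' : ℤ := ⌈a + α * (m:ℝ) - α⌉ with hk'_def
  have hk1 : a + α * (m:ℝ) ≤ (k:ℝ) := Int.le_ceil _
  have hk2 : (k:ℝ) < a + α * (m:ℝ) + 1 := Int.ceil_lt_add_one _
  have hk'le : k' ≤ k := Int.ceil_mono (by linarith)
  have hkle : k ≤ k' + 1 := by
    have h1 : a + α * (m:ℝ) ≤ a + α * (m:ℝ) - α + ((1:ℤ):ℝ) := by push_cast; linarith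
    have h2 := Int.ceil_mono h1
    rwa [Int.ceil_add_intCast] at h2
  by_cases hd : α * (k:ℝ) + (m:ℝ) < d
  · refine ⟨k, m, ?_, ?_, ?_, ?_⟩
    · linarith
    · linarith
    · exact hPm'
    · exact hd
  · push_neg at hd
    have hkk : k = k' + 1 := by
      by_contra hne
      have hk'eq : k' = k := by omega
      rw [hk'eq] at hnot2
      linarith
    have hcast : α * ((k':ℤ):ℝ) = α * (k:ℝ) - α := by rw [hkk]; push_cast; ring
    have hlt : α * (k:ℝ) + (m:ℝ) < c + 1 + α := by linarith [hnot2]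
    refine ⟨k, m - 1, ?_, ?_, ?_, ?_⟩ <;> push_cast
    · linarith
    · linarith
    · linarith
    · linarith

/-- The hyperbolic automorphism of `Γ`: `(x, y) ↦ ((2+α)x, (1-α)y)`. -/
lemma Γ_scale₁ {x y : ℝ} (h : (x, y) ∈ Γ) :
    ((2 + invGolden) * x, (1 - invGolden) * y) ∈ Γ := by
  obtain ⟨n, m, hp⟩ := h
  have hx : x = (n : ℝ) - invGolden * m := congrArg Prod.fst hp
  have hy : y = invGolden * n + m := congrArg Prod.snd hp
  have hsq := invGolden_sq
  subst hx; subst hy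
  refine ⟨2 * n - m, m - n, ?_⟩
  simp only [Prod.mk.injEq]
  constructor <;> push_cast
  · linear_combination (-(m:ℝ)) * hsq
  · linear_combination (-(n:ℝ)) * hsq

/-- The inverse hyperbolic automorphism of `Γ`: `(x, y) ↦ ((1-α)x, (2+α)y)`. -/
lemma Γ_scale₂ {x y : ℝ} (h : (x, y) ∈ Γ) :
    ((1 - invGolden) * x, (2 + invGolden) * y) ∈ Γ := by
  obtain ⟨n, m, hp⟩ := h
  have hx : x = (n : ℝ) - invGolden * m := congrArg Prod.fst hp
  have hy : y = invGolden * n + m := congrArg Prod.snd hp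
  have hsq := invGolden_sq
  subst hx; subst hy
  refine ⟨n + m, n + 2 * m, ?_⟩
  simp only [Prod.mk.injEq]
  constructor <;> push_cast
  · linear_combination (m:ℝ) * hsq
  · linear_combination (n:ℝ) * hsq

private lemma unscale_le {u v : ℝ} (h : (1 - invGolden) * u ≤ v) :
    u ≤ (2 + invGolden) * v := by
  have hsq := invGolden_sq
  have hα := invGolden_pos
  have h2 := mul_le_mul_of_nonneg_left h (show (0:ℝ) ≤ 2 + invGolden by linarith)
  have e : (2 + invGolden) * ((1 - invGolden) * u) = u := by
    linear_combination (-u) * hsq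
  linarith

private lemma unscale_lt {u v : ℝ} (h : v < (1 - invGolden) * u) :
    (2 + invGolden) * v < u := by
  have hsq := invGolden_sq
  have hα := invGolden_pos
  have h2 := mul_lt_mul_of_pos_left h (show (0:ℝ) < 2 + invGolden by linarith)
  have e : (2 + invGolden) * ((1 - invGolden) * u) = u := by
    linear_combination (-u) * hsq
  linarith

private lemma unscale_le' {u v : ℝ} (h : (2 + invGolden) * u ≤ v) :
    u ≤ (1 - invGolden) * v := by
  have hsq := invGolden_sq
  have hα1 := invGolden_lt_one
  have h2 := mul_le_mul_of_nonneg_left h (show (0:ℝ) ≤ 1 - invGolden by linarith)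
  have e : (1 - invGolden) * ((2 + invGolden) * u) = u := by
    linear_combination (-u) * hsq
  linarith

private lemma unscale_lt' {u v : ℝ} (h : v < (2 + invGolden) * u) :
    (1 - invGolden) * v < u := by
  have hsq := invGolden_sq
  have hα1 := invGolden_lt_one
  have h2 := mul_lt_mul_of_pos_left h (show (0:ℝ) < 1 - invGolden by linarith)
  have e : (1 - invGolden) * ((2 + invGolden) * u) = u := by
    linear_combination (-u) * hsq
  linarith

private lemma step_shrinkx (a b c d : ℝ)
    (h : ((Ico ((1 - invGolden) * a) ((1 - invGolden) * b) ×ˢ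
        Ico ((2 + invGolden) * c) ((2 + invGolden) * d)) ∩ Γ).Nonempty) :
    ((Ico a b ×ˢ Ico c d) ∩ Γ).Nonempty := by
  obtain ⟨⟨x, y⟩, hmem, hΓ⟩ := h
  simp only [mem_prod, mem_Ico] at hmem
  refine ⟨((2 + invGolden) * x, (1 - invGolden) * y), ?_, Γ_scale₁ hΓ⟩
  simp only [mem_prod, mem_Ico]
  exact ⟨⟨unscale_le hmem.1.1, unscale_lt hmem.1.2⟩,
    unscale_le' hmem.2.1, unscale_lt' hmem.2.2⟩

private lemma step_shrinky (a b c d : ℝ)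
    (h : ((Ico ((2 + invGolden) * a) ((2 + invGolden) * b) ×ˢ
        Ico ((1 - invGolden) * c) ((1 - invGolden) * d)) ∩ Γ).Nonempty) :
    ((Ico a b ×ˢ Ico c d) ∩ Γ).Nonempty := by
  obtain ⟨⟨x, y⟩, hmem, hΓ⟩ := h
  simp only [mem_prod, mem_Ico] at hmem
  refine ⟨((1 - invGolden) * x, (2 + invGolden) * y), ?_, Γ_scale₂ hΓ⟩
  simp only [mem_prod, mem_Ico]
  exact ⟨⟨unscale_le' hmem.1.1, unscale_lt' hmem.1.2⟩,
    unscale_le hmem.2.1, unscale_lt hmem.2.2⟩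

private lemma iter₁ (j : ℕ) (a b c d : ℝ)
    (h : ((Ico ((1 - invGolden) ^ j * a) ((1 - invGolden) ^ j * b) ×ˢ
        Ico ((2 + invGolden) ^ j * c) ((2 + invGolden) ^ j * d)) ∩ Γ).Nonempty) :
    ((Ico a b ×ˢ Ico c d) ∩ Γ).Nonempty := by
  induction j generalizing a b c d with
  | zero => simpa using h
  | succ j ih =>
    apply step_shrinkx
    apply ih
    have e1 : (1 - invGolden) ^ j * ((1 - invGolden) * a)
        = (1 - invGolden) ^ (j + 1) * a := by ring
    have e2 : (1 - invGolden) ^ j * ((1 - invGolden) * b)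
        = (1 - invGolden) ^ (j + 1) * b := by ring
    have e3 : (2 + invGolden) ^ j * ((2 + invGolden) * c)
        = (2 + invGolden) ^ (j + 1) * c := by ring
    have e4 : (2 + invGolden) ^ j * ((2 + invGolden) * d)
        = (2 + invGolden) ^ (j + 1) * d := by ring
    rw [e1, e2, e3, e4]
    exact h

private lemma iter₂ (j : ℕ) (a b c d : ℝ)
    (h : ((Ico ((2 + invGolden) ^ j * a) ((2 + invGolden) ^ j * b) ×ˢ
        Ico ((1 - invGolden) ^ j * c) ((1 - invGolden) ^ j * d)) ∩ Γ).Nonempty) :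
    ((Ico a b ×ˢ Ico c d) ∩ Γ).Nonempty := by
  induction j generalizing a b c d with
  | zero => simpa using h
  | succ j ih =>
    apply step_shrinky
    apply ih
    have e1 : (2 + invGolden) ^ j * ((2 + invGolden) * a)
        = (2 + invGolden) ^ (j + 1) * a := by ring
    have e2 : (2 + invGolden) ^ j * ((2 + invGolden) * b)
        = (2 + invGolden) ^ (j + 1) * b := by ring
    have e3 : (1 - invGolden) ^ j * ((1 - invGolden) * c)
        = (1 - invGolden) ^ (j + 1) * c := by ring
    have e4 : (1 - invGolden) ^ j * ((1 - invGolden) * d)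
        = (1 - invGolden) ^ (j + 1) * d := by ring
    rw [e1, e2, e3, e4]
    exact h

private lemma core (a b c d : ℝ) (h1 : 1 ≤ d - c) (h2 : d - c < 2 + invGolden)
    (har : 2 + invGolden ≤ (b - a) * (d - c)) :
    ((Ico a b ×ˢ Ico c d) ∩ Γ).Nonempty := by
  have hα := invGolden_pos
  have hα1 := invGolden_lt_one
  have hsq := invGolden_sq
  rcases le_or_gt (1 + invGolden) (d - c) with hcase | hcase
  · have hw : 1 ≤ b - a := by nlinarith
    obtain ⟨n, m, g₁, g₂, g₃, g₄⟩ := core_A a b c d hw hcase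
    exact ⟨((n:ℝ) - invGolden * m, invGolden * n + m), ⟨⟨g₁, g₂⟩, ⟨g₃, g₄⟩⟩, ⟨n, m, rfl⟩⟩
  · have hw : 1 + invGolden ≤ b - a := by nlinarith
    obtain ⟨n, m, g₁, g₂, g₃, g₄⟩ := core_B a b c d hw h1
    exact ⟨((n:ℝ) - invGolden * m, invGolden * n + m), ⟨⟨g₁, g₂⟩, ⟨g₃, g₄⟩⟩, ⟨n, m, rfl⟩⟩

/-- Any axis-parallel half-open rectangle `[a,b) × [c,d)` of area at least
`2 + α` contains at least one point of the lattice `Γ`. -/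
theorem rect_contains_lattice_point (a b c d : ℝ) (hab : a < b) (hcd : c < d)
    (harea : 2 + invGolden ≤ (b - a) * (d - c)) :
    1 ≤ ((Ico a b ×ˢ Ico c d) ∩ Γ).encard := by
  rw [Set.one_le_encard_iff_nonempty]
  have hα := invGolden_pos
  have hα1 := invGolden_lt_one
  have hsq := invGolden_sq
  have hone : (1 - invGolden) * (2 + invGolden) = 1 := by linear_combination -hsq
  have h2pos : (0:ℝ) < 2 + invGolden := by linarith
  have h1pos : (0:ℝ) < 1 - invGolden := by linarith
  have hgt1 : (1:ℝ) < 2 + invGolden := by linarith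
  have hdc : (0:ℝ) < d - c := by linarith
  have hp1 : ∀ j : ℕ, (0:ℝ) < (1 - invGolden) ^ j := fun j => pow_pos h1pos j
  have hp2 : ∀ j : ℕ, (0:ℝ) < (2 + invGolden) ^ j := fun j => pow_pos h2pos j
  have hprod : ∀ j : ℕ, (1 - invGolden) ^ j * (2 + invGolden) ^ j = 1 := fun j => by
    rw [← mul_pow, hone, one_pow]
  obtain ⟨k, hk1, hk2⟩ := exists_mem_Ico_zpow hdc hgt1
  rcases le_or_gt 0 k with hk0 | hk0
  · -- `d - c` is large: shrink vertically
    set j := k.toNat with hj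
    have hkj : ((2 + invGolden):ℝ) ^ k = (2 + invGolden) ^ j := by
      rw [hj, ← zpow_natCast, Int.toNat_of_nonneg hk0]
    have hkj1 : ((2 + invGolden):ℝ) ^ (k + 1)
        = (2 + invGolden) ^ j * (2 + invGolden) := by
      rw [zpow_add_one₀ (ne_of_gt h2pos), hkj]
    have hb1 : (2 + invGolden) ^ j ≤ d - c := by rw [← hkj]; exact hk1
    have hb2 : d - c < (2 + invGolden) ^ j * (2 + invGolden) := by
      rw [← hkj1]; exact hk2
    apply iter₂ j a b c d
    apply core
    · have h := mul_le_mul_of_nonneg_left hb1 (hp1 j).le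
      rw [hprod j] at h
      nlinarith [h]
    · have h := mul_lt_mul_of_pos_left hb2 (hp1 j)
      have e : (1 - invGolden) ^ j * ((2 + invGolden) ^ j * (2 + invGolden))
          = 2 + invGolden := by rw [← mul_assoc, hprod j, one_mul]
      nlinarith [h, e]
    · have e : ((2 + invGolden) ^ j * b - (2 + invGolden) ^ j * a) *
          ((1 - invGolden) ^ j * d - (1 - invGolden) ^ j * c)
          = (1 - invGolden) ^ j * (2 + invGolden) ^ j * ((b - a) * (d - c)) := by ring
      rw [e, hprod j, one_mul]
      exact harea
  · -- `d - c` is small: stretch vertically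
    set j := (-k).toNat with hj
    have hjk : ((j:ℤ)) = -k := by
      rw [hj]; exact Int.toNat_of_nonneg (by omega)
    have hz1 : ((2 + invGolden):ℝ) ^ k = ((2 + invGolden) ^ j)⁻¹ := by
      rw [show k = -(j:ℤ) by omega, zpow_neg, zpow_natCast]
    have hz2 : ((2 + invGolden):ℝ) ^ (k + 1)
        = (2 + invGolden) / (2 + invGolden) ^ j := by
      rw [show k + 1 = 1 - (j:ℤ) by omega, zpow_sub₀ (ne_of_gt h2pos),
        zpow_one, zpow_natCast]
    have hb1 : 1 ≤ (2 + invGolden) ^ j * (d - c) := by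
      rw [hz1] at hk1
      have h := mul_le_mul_of_nonneg_left hk1 (hp2 j).le
      rwa [mul_inv_cancel₀ (ne_of_gt (hp2 j))] at h
    have hb2 : (2 + invGolden) ^ j * (d - c) < 2 + invGolden := by
      rw [hz2] at hk2
      have h := (lt_div_iff₀ (hp2 j)).mp hk2
      linarith [h, mul_comm (d - c) ((2 + invGolden) ^ j)]
    apply iter₁ j a b c d
    apply core
    · nlinarith [hb1]
    · nlinarith [hb2]
    · have e : ((1 - invGolden) ^ j * b - (1 - invGolden) ^ j * a) *
          ((2 + invGolden) ^ j * d - (2 + invGolden) ^ j * c)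
          = (1 - invGolden) ^ j * (2 + invGolden) ^ j * ((b - a) * (d - c)) := by ring
      rw [e, hprod j, one_mul]
      exact harea
end

section
/- Any axis-parallel half-open rectangle of area 2 + α can be covered by at most 12 axis-parallel half-open rectangles, each of area at most 1/(3 + 2α); in particular, 2 + α < 12/(3 + 2α). -/
open Set

lemma grid_aux (w : ℝ) (hw : 0 < w) (n : ℕ) (u : ℝ) (h0 : 0 ≤ u) (h1 : u < n * w) :
    ∃ j : ℕ, j < n ∧ (j : ℝ) * w ≤ u ∧ u < (j + 1) * w := by
  have hdiv : 0 ≤ u / w := div_nonneg h0 hw.le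
  refine ⟨⌊u / w⌋₊, ?_, ?_, ?_⟩
  · have : u / w < n := (div_lt_iff₀ hw).2 h1
    exact Nat.floor_lt hdiv |>.2 this
  · have := Nat.floor_le hdiv
    calc (⌊u / w⌋₊ : ℝ) * w ≤ (u / w) * w := by nlinarith
    _ = u := by field_simp
  · have := Nat.lt_floor_add_one (u / w)
    have := (div_lt_iff₀ hw).1 this
    linarith

lemma invGolden_facts : 0 < invGolden ∧ invGolden < 4 / 5 ∧
    invGolden * invGolden = 1 - invGolden := by
  have h5 : Real.sqrt 5 ^ 2 = 5 := Real.sq_sqrt (by norm_num)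
  have hnn : 0 ≤ Real.sqrt 5 := Real.sqrt_nonneg 5
  refine ⟨?_, ?_, ?_⟩
  · unfold invGolden; nlinarith
  · unfold invGolden; nlinarith
  · unfold invGolden; nlinarith

/-- `2 + α < 12/(3 + 2α)`, and any axis-parallel half-open rectangle of area
`2 + α` can be covered by at most `12` axis-parallel half-open rectangles,
each of area at most `1/(3 + 2α)`. -/
theorem rect_cover_by_small_rects :
    2 + invGolden < 12 / (3 + 2 * invGolden) ∧
    ∀ a b c d : ℝ, a < b → c < d → (b - a) * (d - c) = 2 + invGolden →
      ∃ R : Fin 12 → Set (ℝ × ℝ),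
        (∀ i : Fin 12, ∃ a' b' c' d' : ℝ, a' < b' ∧ c' < d' ∧
          R i = Ico a' b' ×ˢ Ico c' d' ∧
          (b' - a') * (d' - c') ≤ 1 / (3 + 2 * invGolden)) ∧
        Ico a b ×ˢ Ico c d ⊆ ⋃ i : Fin 12, R i := by
  obtain ⟨hpos, hlt, hsq⟩ := invGolden_facts
  have hden : (0 : ℝ) < 3 + 2 * invGolden := by linarith
  constructor
  · rw [lt_div_iff₀ hden]; nlinarith [hsq]
  intro a b c d hab hcd harea
  set w : ℝ := (b - a) / 3 with hw_def
  set h : ℝ := (d - c) / 4 with hh_def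
  have hw : 0 < w := by apply div_pos <;> linarith
  have hh : 0 < h := by apply div_pos <;> linarith
  refine ⟨fun i => Ico (a + (i.val % 3 : ℕ) * w) (a + ((i.val % 3 : ℕ) + 1) * w)
      ×ˢ Ico (c + (i.val / 3 : ℕ) * h) (c + ((i.val / 3 : ℕ) + 1) * h), ?_, ?_⟩
  · intro i
    refine ⟨_, _, _, _, by nlinarith, by nlinarith, rfl, ?_⟩
    have harea' : ((a + ((i.val % 3 : ℕ) + 1) * w) - (a + (i.val % 3 : ℕ) * w)) *
        ((c + ((i.val / 3 : ℕ) + 1) * h) - (c + (i.val / 3 : ℕ) * h)) = w * h := by ring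
    rw [harea']
    have hwh : w * h = (2 + invGolden) / 12 := by
      rw [hw_def, hh_def]; field_simp; linarith [harea]
    rw [hwh, div_le_div_iff₀ (by norm_num) hden]
    nlinarith [hsq]
  · rintro ⟨x, y⟩ ⟨⟨hx1, hx2⟩, ⟨hy1, hy2⟩⟩
    obtain ⟨j, hj3, hj1, hj2⟩ := grid_aux w hw 3 (x - a) (by linarith)
      (by rw [hw_def]; push_cast; linarith)
    obtain ⟨k, hk4, hk1, hk2⟩ := grid_aux h hh 4 (y - c) (by linarith)
      (by rw [hh_def]; push_cast; linarith)
    refine mem_iUnion.2 ⟨⟨j + 3 * k, by omega⟩, ?_, ?_⟩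
    · have e1 : (j + 3 * k) % 3 = j := by omega
      simp only [e1]
      constructor <;> push_cast <;> linarith
    · have e2 : (j + 3 * k) / 3 = k := by omega
      simp only [e2]
      constructor <;> push_cast <;> linarith
end

section
/- Let Δ = [a, b) × [c, d) be an axis-parallel half-open rectangle with b − a ≥ 1 and d − c ≥ 1, and suppose there exist a₀ ∈ [a, b) and c₀ ∈ [c, d) such that (b, c₀)ᵀ ∈ Γ and (a₀, d)ᵀ ∈ Γ. If Δ ∩ Γ = ∅, then b − a < 1 + α and d − c < 1 + α, and hence μ(Δ) < (1 + α)² = 2 + α. -/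
open Set

/-- Let `Δ = [a,b) × [c,d)` with `b - a ≥ 1` and `d - c ≥ 1`, and suppose
there are `a₀ ∈ [a,b)` and `c₀ ∈ [c,d)` with `(b, c₀)ᵀ ∈ Γ` and
`(a₀, d)ᵀ ∈ Γ`. If `Δ ∩ Γ = ∅`, then `b - a < 1 + α` and `d - c < 1 + α`,
hence `μ(Δ) < (1 + α)² = 2 + α`. -/
theorem empty_rect_side_bounds (a b c d : ℝ)
    (hab : 1 ≤ b - a) (hcd : 1 ≤ d - c)
    (hbc₀ : ∃ c₀ ∈ Ico c d, ((b, c₀) : ℝ × ℝ) ∈ Γ)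
    (ha₀d : ∃ a₀ ∈ Ico a b, ((a₀, d) : ℝ × ℝ) ∈ Γ)
    (hempty : (Ico a b ×ˢ Ico c d) ∩ Γ = ∅) :
    b - a < 1 + invGolden ∧ d - c < 1 + invGolden ∧
      (b - a) * (d - c) < (1 + invGolden) ^ 2 ∧
      (1 + invGolden) ^ 2 = 2 + invGolden := by
  have h5 : Real.sqrt 5 ^ 2 = 5 := Real.sq_sqrt (by norm_num)
  have h5pos : 2 < Real.sqrt 5 := by nlinarith [Real.sqrt_nonneg 5]
  have h5lt : Real.sqrt 5 < 3 := by nlinarith [Real.sqrt_nonneg 5]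
  have hα0 : 0 < invGolden := by unfold invGolden; linarith
  have hα1 : invGolden < 1 := by unfold invGolden; linarith
  have hαsq : invGolden ^ 2 = 1 - invGolden := by
    unfold invGolden; linear_combination h5 / 4
  have hmem : ∀ p : ℝ × ℝ, p ∈ Ico a b ×ˢ Ico c d → p ∉ Γ := by
    intro p hp hpΓ
    have : p ∈ (Ico a b ×ˢ Ico c d) ∩ Γ := ⟨hp, hpΓ⟩
    rw [hempty] at this
    exact this
  have hrect : ∀ x y : ℝ, a ≤ x → x < b → c ≤ y → y < d →
      ((x, y) : ℝ × ℝ) ∈ Ico a b ×ˢ Ico c d :=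
    fun x y h1 h2 h3 h4 => ⟨⟨h1, h2⟩, ⟨h3, h4⟩⟩
  obtain ⟨c₀, ⟨hc₀c, hc₀d⟩, n, m, hnm⟩ := hbc₀
  obtain ⟨a₀, ⟨ha₀a, ha₀b⟩, n', m', hnm'⟩ := ha₀d
  have hb : b = (n : ℝ) - invGolden * m := congrArg Prod.fst hnm
  have hc₀ : c₀ = invGolden * n + m := congrArg Prod.snd hnm
  have ha₀ : a₀ = (n' : ℝ) - invGolden * m' := congrArg Prod.fst hnm'
  have hd : d = invGolden * n' + m' := congrArg Prod.snd hnm'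
  -- First bound: b - a < 1 + α
  have hba : b - a < 1 + invGolden := by
    by_contra h
    push_neg at h
    -- Step 1: c₀ < c + α, else (b-1, c₀-α) ∈ Δ ∩ Γ
    have hc₀α : c₀ < c + invGolden := by
      by_contra h2
      push_neg at h2
      refine hmem (b - 1, c₀ - invGolden)
        (hrect _ _ (by linarith) (by linarith) (by linarith) (by linarith)) ⟨n - 1, m, ?_⟩
      rw [Prod.mk.injEq]
      push_cast
      exact ⟨by linear_combination hb, by linear_combination hc₀⟩
    -- Step 2: (b-1-α, c₀+1-α) ∈ Δ ∩ Γ, contradiction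
    refine hmem (b - 1 - invGolden, c₀ + 1 - invGolden)
      (hrect _ _ (by linarith) (by linarith) (by linarith) (by linarith)) ⟨n - 1, m + 1, ?_⟩
    rw [Prod.mk.injEq]
    push_cast
    exact ⟨by linear_combination hb, by linear_combination hc₀⟩
  -- Second bound: d - c < 1 + α
  have hdc : d - c < 1 + invGolden := by
    by_contra h
    push_neg at h
    have ha₀α : b - invGolden ≤ a₀ := by
      by_contra h2
      push_neg at h2
      refine hmem (a₀ + invGolden, d - 1)
        (hrect _ _ (by linarith) (by linarith) (by linarith) (by linarith)) ⟨n', m' - 1, ?_⟩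
      rw [Prod.mk.injEq]
      push_cast
      exact ⟨by linear_combination ha₀, by linear_combination hd⟩
    refine hmem (a₀ + invGolden - 1, d - 1 - invGolden)
      (hrect _ _ (by linarith) (by linarith) (by linarith) (by linarith)) ⟨n' - 1, m' - 1, ?_⟩
    rw [Prod.mk.injEq]
    push_cast
    exact ⟨by linear_combination ha₀, by linear_combination hd⟩
  have hsq : (1 + invGolden) ^ 2 = 2 + invGolden := by linear_combination hαsq
  have hprod : (b - a) * (d - c) < (1 + invGolden) ^ 2 := by
    calc (b - a) * (d - c) < (1 + invGolden) * (1 + invGolden) :=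
          mul_lt_mul'' hba hdc (by linarith) (by linarith)
      _ = (1 + invGolden) ^ 2 := by ring
  exact ⟨hba, hdc, hprod, hsq⟩
end
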